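/- Let α = log 3 / log 2 and β* = log 5 / log 2. Then the set {u ∈ C(K) : sup_{n≥1} a_n(u) < ∞} is strictly contained in the intersection over β ∈ (α, β*) of the sets {u ∈ C(K) : Σ_{n=1}^{∞} 2^{(β−β*)n} a_n(u) < ∞}; that is, there exists a continuous u : K → ℝ with Σ_{n=1}^{∞} 2^{(β−β*)n} a_n(u) < ∞ for every β ∈ (α, β*) but sup_{n≥1} a_n(u) = ∞. -/

import Mathlib

open Set

namespace SG

/-- The three vertices of the Sierpiński gasket. -/
noncomputable def p : Fin 3 → ℝ × ℝ := ![(0, 0), (1, 0), (1 / 2, Real.sqrt 3 / 2)]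

/-- The three contractions `f_i(x) = (x + p_i)/2`. -/
noncomputable def f (i : Fin 3) (x : ℝ × ℝ) : ℝ × ℝ :=
  ((x.1 + (p i).1) / 2, (x.2 + (p i).2) / 2)

/-- The vertex sets `V₀ = {p₀,p₁,p₂}`, `V_{n+1} = ⋃ f_i(V_n)`. -/
noncomputable def V : ℕ → Set (ℝ × ℝ)
  | 0 => Set.range p
  | n + 1 => ⋃ i : Fin 3, f i '' V n

/-- The Sierpiński gasket: the closure of `V_* = ⋃_n V_n`. -/
noncomputable def K : Set (ℝ × ℝ) := closure (⋃ n, V n)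

/-- For a word `w = w₁…w_n`, the composition `f_{w₁} ∘ … ∘ f_{w_n}`. -/
noncomputable def fw {n : ℕ} (w : Fin n → Fin 3) (x : ℝ × ℝ) : ℝ × ℝ :=
  (List.ofFn w).foldr f x

/-- The graph energy
`a_n(u) = (5/3)^n Σ_{w ∈ W_n} Σ_{{p,q} ⊆ V_w, p ≠ q} (u(p) − u(q))²`
(the inner sum over unordered pairs is written as half of the ordered sum). -/
noncomputable def a (n : ℕ) (u : ℝ × ℝ → ℝ) : ℝ :=
  (5 / 3) ^ n * ∑ w : Fin n → Fin 3,
    (∑ i : Fin 3, ∑ j : Fin 3, (u (fw w (p i)) - u (fw w (p j))) ^ 2) / 2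

/-- `F_loc`: continuous functions on `K` with `sup_{n≥1} a_n(u) < ∞`. -/
def Floc : Set (ℝ × ℝ → ℝ) :=
  {u | ContinuousOn u K ∧ BddAbove (Set.range fun n : ℕ => a (n + 1) u)}

/-- `F_β`: continuous functions on `K` with `Σ_{n≥1} 2^{(β−β*)n} a_n(u) < ∞`,
where `β* = log 5 / log 2`. -/
def Fbeta (β : ℝ) : Set (ℝ × ℝ → ℝ) :=
  {u | ContinuousOn u K ∧
    Summable fun n : ℕ =>
      (2 : ℝ) ^ ((β - Real.log 5 / Real.log 2) * (n + 1)) * a (n + 1) u}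

end SG

namespace SGP
open SG

def Δ : Set (ℝ × ℝ) :=
  {x | 0 ≤ x.2 ∧ x.2 ≤ Real.sqrt 3 * x.1 ∧ x.2 ≤ Real.sqrt 3 * (1 - x.1)}

lemma s3_pos : 0 < Real.sqrt 3 := Real.sqrt_pos.2 (by norm_num)

noncomputable def finv (i : Fin 3) (x : ℝ × ℝ) : ℝ × ℝ :=
  (2 * x.1 - (p i).1, 2 * x.2 - (p i).2)

lemma finv_f (i j : Fin 3) (x : ℝ × ℝ) :
    finv i (f j x) = (x.1 + (p j).1 - (p i).1, x.2 + (p j).2 - (p i).2) := by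
  simp only [finv, f]; exact Prod.ext (by ring) (by ring)

lemma f_finv (j : Fin 3) (x : ℝ × ℝ) : f j (finv j x) = x := by
  simp only [finv, f]; exact Prod.ext (by ring) (by ring)

lemma finv_f_same (j : Fin 3) (x : ℝ × ℝ) : finv j (f j x) = x := by
  simp only [finv, f]; exact Prod.ext (by ring) (by ring)

lemma mem_Δ {x : ℝ × ℝ} :
    x ∈ Δ ↔ 0 ≤ x.2 ∧ x.2 ≤ Real.sqrt 3 * x.1 ∧ x.2 ≤ Real.sqrt 3 * (1 - x.1) :=
  Iff.rfl

lemma p_mem_Δ (i : Fin 3) : p i ∈ Δ := by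
  have h := s3_pos
  fin_cases i <;> rw [mem_Δ] <;> norm_num [p] <;>
    repeat' apply And.intro
  all_goals nlinarith

lemma f_maps_Δ (j : Fin 3) {x : ℝ × ℝ} (hx : x ∈ Δ) : f j x ∈ Δ := by
  have h := s3_pos
  obtain ⟨h1, h2, h3⟩ := hx
  fin_cases j <;> rw [mem_Δ] <;> norm_num [f, p] <;>
    repeat' apply And.intro
  all_goals nlinarith

/-- collision lemma: if `y ∈ Δ` and `y + p j - p i ∈ Δ` with `i ≠ j` then `y = p i`. -/
lemma collision {i j : Fin 3} (hij : i ≠ j) {y : ℝ × ℝ} (hy : y ∈ Δ)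
    (h : (y.1 + (p j).1 - (p i).1, y.2 + (p j).2 - (p i).2) ∈ Δ) : y = p i := by
  have hs := s3_pos
  obtain ⟨h1, h2, h3⟩ := hy
  obtain ⟨g1, g2, g3⟩ := h
  simp only at g1 g2 g3
  fin_cases i <;> fin_cases j <;> rw [Prod.ext_iff] <;> norm_num [p] at g1 g2 g3 ⊢ <;>
    repeat' apply And.intro
  all_goals first | exact absurd rfl hij | nlinarith

lemma p_inj : Function.Injective p := by
  have := s3_pos
  intro i j h
  fin_cases i <;> fin_cases j <;> simp_all [p, Prod.ext_iff] <;> nlinarith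

lemma finv_p_self (i : Fin 3) : finv i (p i) = p i := by
  fin_cases i <;> simp [finv, p, Prod.ext_iff] <;> norm_num <;> ring

lemma finv_p_not_mem {i j : Fin 3} (hij : j ≠ i) : finv i (p j) ∉ Δ := by
  have hs := s3_pos
  fin_cases i <;> fin_cases j <;> simp only [mem_Δ, finv, not_and] <;>
    norm_num [p] <;> first | exact absurd rfl hij | (intros <;> nlinarith)

end SGP
namespace SGP
open SG

lemma Δ_closed : IsClosed Δ := by
  have h1 : IsClosed {x : ℝ × ℝ | 0 ≤ x.2} :=
    isClosed_le continuous_const continuous_snd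
  have h2 : IsClosed {x : ℝ × ℝ | x.2 ≤ Real.sqrt 3 * x.1} :=
    isClosed_le continuous_snd (continuous_const.mul continuous_fst)
  have h3 : IsClosed {x : ℝ × ℝ | x.2 ≤ Real.sqrt 3 * (1 - x.1)} :=
    isClosed_le continuous_snd (continuous_const.mul (continuous_const.sub continuous_fst))
  exact (h1.inter (h2.inter h3))

lemma Δ_coord {x : ℝ × ℝ} (hx : x ∈ Δ) :
    0 ≤ x.1 ∧ x.1 ≤ 1 ∧ 0 ≤ x.2 ∧ x.2 ≤ Real.sqrt 3 / 2 := by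
  have hs := s3_pos
  obtain ⟨h1, h2, h3⟩ := hx
  refine ⟨by nlinarith, by nlinarith, h1, by nlinarith⟩

lemma Δ_bounded : Bornology.IsBounded Δ := by
  have : Δ ⊆ Set.Icc (0:ℝ) 1 ×ˢ Set.Icc (0:ℝ) (Real.sqrt 3 / 2) := by
    intro x hx
    obtain ⟨a, b, c, d⟩ := Δ_coord hx
    exact ⟨⟨a, b⟩, ⟨c, d⟩⟩
  exact (Bornology.IsBounded.prod (Metric.isBounded_Icc _ _) (Metric.isBounded_Icc _ _)).subset this

lemma V_sub_Δ (n : ℕ) : V n ⊆ Δ := by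
  induction n with
  | zero => rintro x ⟨i, rfl⟩; exact p_mem_Δ i
  | succ n ih =>
    rintro x hx
    simp only [V, Set.mem_iUnion] at hx
    obtain ⟨i, y, hy, rfl⟩ := hx
    exact f_maps_Δ i (ih hy)

lemma K_sub_Δ : K ⊆ Δ := by
  apply closure_minimal _ Δ_closed
  exact Set.iUnion_subset V_sub_Δ

lemma V_sub_K (n : ℕ) : V n ⊆ K := le_trans (Set.subset_iUnion V n) subset_closure

lemma p_mem_K (i : Fin 3) : p i ∈ K := V_sub_K 0 ⟨i, rfl⟩

lemma K_closed : IsClosed K := isClosed_closure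

lemma K_compact : IsCompact K :=
  Metric.isCompact_of_isClosed_isBounded K_closed
    ((Δ_bounded.subset K_sub_Δ))

lemma f_cont (i : Fin 3) : Continuous (f i) := by
  unfold f; fun_prop

lemma finv_cont (i : Fin 3) : Continuous (finv i) := by
  unfold finv; fun_prop

lemma K_cover : K ⊆ ⋃ i : Fin 3, f i '' K := by
  have hcl : IsClosed (⋃ i : Fin 3, f i '' K) := by
    apply isClosed_iUnion_of_finite
    intro i
    exact (K_compact.image (f_cont i)).isClosed
  apply closure_minimal _ hcl
  apply Set.iUnion_subset
  intro n
  cases n with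
  | zero =>
    rintro x ⟨i, rfl⟩
    have : p i = f i (p i) := by
      fin_cases i <;> simp [f, p, Prod.ext_iff] <;> norm_num
    exact Set.mem_iUnion.2 ⟨i, p i, p_mem_K i, this.symm⟩
  | succ n =>
    rintro x hx
    simp only [V, Set.mem_iUnion] at hx
    obtain ⟨i, y, hy, rfl⟩ := hx
    exact Set.mem_iUnion.2 ⟨i, y, V_sub_K n hy, rfl⟩

/-- self-similarity: if `x ∈ K` and `finv j x ∈ Δ` then `finv j x ∈ K`. -/
lemma K_self {j : Fin 3} {x : ℝ × ℝ} (hx : x ∈ K) (hj : finv j x ∈ Δ) : finv j x ∈ K := by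
  obtain ⟨i, y, hy, rfl⟩ := Set.mem_iUnion.1 (K_cover hx)
  by_cases hij : i = j
  · subst hij; rwa [finv_f_same]
  · have hyΔ : y ∈ Δ := K_sub_Δ hy
    rw [finv_f] at hj
    have := collision (Ne.symm hij) hyΔ hj
    subst this
    rw [finv_f]
    have : ((p j).1 + (p i).1 - (p j).1, (p j).2 + (p i).2 - (p j).2) = p i :=
      Prod.ext (by ring) (by ring)
    rw [this]
    exact p_mem_K i

lemma K_branch {x : ℝ × ℝ} (hx : x ∈ K) :
    finv 0 x ∈ Δ ∨ finv 1 x ∈ Δ ∨ finv 2 x ∈ Δ := by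
  obtain ⟨i, y, hy, rfl⟩ := Set.mem_iUnion.1 (K_cover hx)
  have hyΔ : y ∈ Δ := K_sub_Δ hy
  have h : finv i (f i y) ∈ Δ := by rwa [finv_f_same]
  fin_cases i
  · exact Or.inl h
  · exact Or.inr (Or.inl h)
  · exact Or.inr (Or.inr h)

end SGP
namespace SGP
open SG

/-- harmonic extension matrices -/
noncomputable def A (i : Fin 3) (b : Fin 3 → ℝ) : Fin 3 → ℝ := fun j =>
  if i = j then b i else (b i + b j + (b 0 + b 1 + b 2)) / 5

lemma A_self (i : Fin 3) (b : Fin 3 → ℝ) : A i b i = b i := by simp [A]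

lemma A_symm (i j : Fin 3) (b : Fin 3 → ℝ) : A i b j = A j b i := by
  by_cases h : i = j
  · subst h; rfl
  · simp only [A, if_neg h, if_neg (Ne.symm h)]; ring

/-- oscillation -/
noncomputable def N (b : Fin 3 → ℝ) : ℝ := |b 0 - b 1| + |b 0 - b 2| + |b 1 - b 2|

lemma N_nonneg (b : Fin 3 → ℝ) : 0 ≤ N b := by
  unfold N; positivity

lemma absB (u v : ℝ) : |(2 * u + v) / 5| ≤ (2 * |u| + |v|) / 5 := by
  rw [abs_div, abs_of_nonneg (by norm_num : (0:ℝ) ≤ 5)]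
  have h : |2 * u + v| ≤ 2 * |u| + |v| := by
    calc |2 * u + v| ≤ |2 * u| + |v| := abs_add_le _ _
    _ = 2 * |u| + |v| := by rw [abs_mul]; norm_num
  linarith

lemma absB1 (u : ℝ) : |u / 5| ≤ |u| / 5 := by
  rw [abs_div, abs_of_nonneg (by norm_num : (0:ℝ) ≤ 5)]

lemma fin3_cases (j : Fin 3) : j = 0 ∨ j = 1 ∨ j = 2 := by revert j; decide

lemma N_A (j : Fin 3) (b : Fin 3 → ℝ) : N (A j b) ≤ 3 / 5 * N b := by
  have c12 := abs_sub_comm (b 1) (b 2)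
  have c01 := abs_sub_comm (b 0) (b 1)
  have c02 := abs_sub_comm (b 0) (b 2)
  rcases fin3_cases j with rfl | rfl | rfl
  · have e1 : A 0 b 0 - A 0 b 1 = (2 * (b 0 - b 1) + (b 0 - b 2)) / 5 := by
      norm_num [A, Fin.ext_iff]; ring
    have e2 : A 0 b 0 - A 0 b 2 = (2 * (b 0 - b 2) + (b 0 - b 1)) / 5 := by
      norm_num [A, Fin.ext_iff]; ring
    have e3 : A 0 b 1 - A 0 b 2 = (2 * (b 1 - b 2) + (b 1 - b 2) * 3 - (b 1 - b 2) * 4) / 5 := by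
      norm_num [A, Fin.ext_iff]; ring
    unfold N
    rw [e1, e2, e3]
    have h1 := absB (b 0 - b 1) (b 0 - b 2)
    have h2 := absB (b 0 - b 2) (b 0 - b 1)
    have h3 : |(2 * (b 1 - b 2) + (b 1 - b 2) * 3 - (b 1 - b 2) * 4) / 5| ≤ |b 1 - b 2| / 5 := by
      have : (2 * (b 1 - b 2) + (b 1 - b 2) * 3 - (b 1 - b 2) * 4) = (b 1 - b 2) := by ring
      rw [this]; exact absB1 _
    unfold N at *
    linarith [abs_nonneg (b 0 - b 1), abs_nonneg (b 0 - b 2), abs_nonneg (b 1 - b 2)]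
  · have e1 : A 1 b 0 - A 1 b 1 = (2 * (b 0 - b 1) + (b 2 - b 1)) / 5 := by
      norm_num [A, Fin.ext_iff]; ring
    have e2 : A 1 b 0 - A 1 b 2 = (b 0 - b 2) / 5 := by
      norm_num [A, Fin.ext_iff]; ring
    have e3 : A 1 b 1 - A 1 b 2 = (2 * (b 1 - b 2) + (b 1 - b 0)) / 5 := by
      norm_num [A, Fin.ext_iff]; ring
    unfold N
    rw [e1, e2, e3]
    have h1 := absB (b 0 - b 1) (b 2 - b 1)
    have h2 := absB1 (b 0 - b 2)
    have h3 := absB (b 1 - b 2) (b 1 - b 0)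
    have c10 := abs_sub_comm (b 1) (b 0)
    have c21 := abs_sub_comm (b 2) (b 1)
    unfold N at *
    linarith [abs_nonneg (b 0 - b 1), abs_nonneg (b 0 - b 2), abs_nonneg (b 1 - b 2)]
  · have e1 : A 2 b 0 - A 2 b 1 = (b 0 - b 1) / 5 := by
      norm_num [A, Fin.ext_iff]; ring
    have e2 : A 2 b 0 - A 2 b 2 = (2 * (b 0 - b 2) + (b 1 - b 2)) / 5 := by
      norm_num [A, Fin.ext_iff]; ring
    have e3 : A 2 b 1 - A 2 b 2 = (2 * (b 1 - b 2) + (b 0 - b 2)) / 5 := by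
      norm_num [A, Fin.ext_iff]; ring
    unfold N
    rw [e1, e2, e3]
    have h1 := absB1 (b 0 - b 1)
    have h2 := absB (b 0 - b 2) (b 1 - b 2)
    have h3 := absB (b 1 - b 2) (b 0 - b 2)
    unfold N at *
    linarith [abs_nonneg (b 0 - b 1), abs_nonneg (b 0 - b 2), abs_nonneg (b 1 - b 2)]

lemma A_zero_diff (j : Fin 3) (b : Fin 3 → ℝ) : |A j b 0 - b 0| ≤ 3 / 5 * N b := by
  rcases fin3_cases j with rfl | rfl | rfl
  · have : A 0 b 0 - b 0 = 0 := by norm_num [A, Fin.ext_iff]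
    rw [this, abs_zero]
    linarith [N_nonneg b]
  · have e : A 1 b 0 - b 0 = (2 * (b 1 - b 0) + (b 2 - b 0)) / 5 := by norm_num [A, Fin.ext_iff]; ring
    rw [e]
    have h := absB (b 1 - b 0) (b 2 - b 0)
    have c1 := abs_sub_comm (b 1) (b 0)
    have c2 := abs_sub_comm (b 2) (b 0)
    unfold N
    linarith [abs_nonneg (b 1 - b 2), abs_nonneg (b 1 - b 0), abs_nonneg (b 2 - b 0)]
  · have e : A 2 b 0 - b 0 = (2 * (b 2 - b 0) + (b 1 - b 0)) / 5 := by norm_num [A, Fin.ext_iff]; ring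
    rw [e]
    have h := absB (b 2 - b 0) (b 1 - b 0)
    have c1 := abs_sub_comm (b 1) (b 0)
    have c2 := abs_sub_comm (b 2) (b 0)
    unfold N
    linarith [abs_nonneg (b 1 - b 2), abs_nonneg (b 1 - b 0), abs_nonneg (b 2 - b 0)]

lemma avg_diff (b : Fin 3 → ℝ) : |(b 0 + b 1 + b 2) / 3 - b 0| ≤ N b := by
  have e : (b 0 + b 1 + b 2) / 3 - b 0 = ((b 1 - b 0) + (b 2 - b 0)) / 3 := by ring
  rw [e]
  have h : |((b 1 - b 0) + (b 2 - b 0)) / 3| ≤ (|b 1 - b 0| + |b 2 - b 0|) / 3 := by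
    rw [abs_div, abs_of_nonneg (by norm_num : (0:ℝ) ≤ 3)]
    have := abs_add_le (b 1 - b 0) (b 2 - b 0)
    linarith
  have c1 := abs_sub_comm (b 1) (b 0)
  have c2 := abs_sub_comm (b 2) (b 0)
  unfold N
  linarith [abs_nonneg (b 1 - b 2), abs_nonneg (b 0 - b 1), abs_nonneg (b 0 - b 2)]

/-- the (ordered) graph energy of a triple of values -/
noncomputable def Q (b : Fin 3 → ℝ) : ℝ := ∑ i : Fin 3, ∑ j : Fin 3, (b i - b j) ^ 2

lemma Q_expand (b : Fin 3 → ℝ) :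
    Q b = 2 * ((b 0 - b 1)^2 + (b 0 - b 2)^2 + (b 1 - b 2)^2) := by
  simp [Q, Fin.sum_univ_three]; ring

lemma Q_nonneg (b : Fin 3 → ℝ) : 0 ≤ Q b := by
  rw [Q_expand]; positivity

lemma Q_smul (c : ℝ) (b : Fin 3 → ℝ) : Q (fun i => c * b i) = c^2 * Q b := by
  simp only [Q_expand]; ring

lemma Q_const_zero : Q (fun _ => (0:ℝ)) = 0 := by simp [Q_expand]

lemma Q_sum_A (b : Fin 3 → ℝ) : Q (A 0 b) + Q (A 1 b) + Q (A 2 b) = 3 / 5 * Q b := by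
  simp only [Q_expand]
  norm_num [A, Fin.ext_iff]
  ring

end SGP
namespace SGP
open SG

open Classical in
noncomputable def G : ℕ → (Fin 3 → ℝ) → ℝ × ℝ → ℝ
  | 0, b, x => b 0 + (b 1 - b 0) * x.1 + (2 * b 2 - b 0 - b 1) / Real.sqrt 3 * x.2
  | (m+1), b, x =>
      if finv 0 x ∈ Δ then G m (A 0 b) (finv 0 x)
      else if finv 1 x ∈ Δ then G m (A 1 b) (finv 1 x)
      else if finv 2 x ∈ Δ then G m (A 2 b) (finv 2 x)
      else (b 0 + b 1 + b 2) / 3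

lemma G_zero_p (b : Fin 3 → ℝ) (i : Fin 3) : G 0 b (p i) = b i := by
  have hs := s3_pos
  rcases fin3_cases i with rfl | rfl | rfl <;> simp only [G] <;> norm_num [p, Matrix.cons_val_two, Matrix.tail_cons, Matrix.head_cons]
  field_simp
  ring

lemma G_p (m : ℕ) (b : Fin 3 → ℝ) (i : Fin 3) : G m b (p i) = b i := by
  induction m generalizing b with
  | zero => exact G_zero_p b i
  | succ m ih =>
    rcases fin3_cases i with rfl | rfl | rfl <;> simp only [G]
    · rw [if_pos (by rw [finv_p_self]; exact p_mem_Δ 0), finv_p_self, ih, A_self]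
    · rw [if_neg (finv_p_not_mem (by decide)),
        if_pos (by rw [finv_p_self]; exact p_mem_Δ 1), finv_p_self, ih, A_self]
    · rw [if_neg (finv_p_not_mem (by decide)), if_neg (finv_p_not_mem (by decide)),
        if_pos (by rw [finv_p_self]; exact p_mem_Δ 2), finv_p_self, ih, A_self]

lemma branch_eq {i j : Fin 3} (hij : i ≠ j) {x : ℝ × ℝ}
    (hj : finv j x ∈ Δ) (hi : finv i x ∈ Δ) :
    finv j x = p i ∧ finv i x = p j := by
  have h2 : finv i x =
      ((finv j x).1 + (p j).1 - (p i).1, (finv j x).2 + (p j).2 - (p i).2) := by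
    conv_lhs => rw [← f_finv j x, finv_f]
  have e1 : finv j x = p i := collision hij hj (h2 ▸ hi)
  refine ⟨e1, ?_⟩
  rw [h2, e1]
  exact Prod.ext (by ring) (by ring)

lemma G_branch_agree {i j : Fin 3} (hij : i ≠ j) {x : ℝ × ℝ}
    (hj : finv j x ∈ Δ) (hi : finv i x ∈ Δ) (m : ℕ) (b : Fin 3 → ℝ) :
    G m (A i b) (finv i x) = G m (A j b) (finv j x) := by
  obtain ⟨e1, e2⟩ := branch_eq hij hj hi
  rw [e1, e2, G_p, G_p, A_symm]

/-- the recursion for `G` on the cells -/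
lemma G_succ {j : Fin 3} {x : ℝ × ℝ} (hx : finv j x ∈ Δ) (m : ℕ) (b : Fin 3 → ℝ) :
    G (m+1) b x = G m (A j b) (finv j x) := by
  rcases fin3_cases j with rfl | rfl | rfl
  · simp only [G]; rw [if_pos hx]
  · simp only [G]
    by_cases h0 : finv 0 x ∈ Δ
    · rw [if_pos h0]; exact G_branch_agree (by decide) hx h0 m b
    · rw [if_neg h0, if_pos hx]
  · simp only [G]
    by_cases h0 : finv 0 x ∈ Δ
    · rw [if_pos h0]; exact G_branch_agree (by decide) hx h0 m b
    · by_cases h1 : finv 1 x ∈ Δ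
      · rw [if_neg h0, if_pos h1]; exact G_branch_agree (by decide) hx h1 m b
      · rw [if_neg h0, if_neg h1, if_pos hx]

lemma G_f {j : Fin 3} {x : ℝ × ℝ} (hx : x ∈ Δ) (m : ℕ) (b : Fin 3 → ℝ) :
    G (m+1) b (f j x) = G m (A j b) x := by
  have h : finv j (f j x) ∈ Δ := by rwa [finv_f_same]
  rw [G_succ h m b, finv_f_same]

lemma G_zero_diff (c : Fin 3 → ℝ) {y : ℝ × ℝ} (hy : y ∈ Δ) : |G 0 c y - c 0| ≤ N c := by
  have hs := s3_pos
  obtain ⟨hy1, hy1', hy2, hy2'⟩ := Δ_coord hy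
  have e : G 0 c y - c 0 = (c 1 - c 0) * y.1 + (2 * c 2 - c 0 - c 1) / Real.sqrt 3 * y.2 := by
    simp only [G]; ring
  rw [e]
  have habs : |(c 1 - c 0) * y.1 + (2 * c 2 - c 0 - c 1) / Real.sqrt 3 * y.2|
      ≤ |c 1 - c 0| * y.1 + |2 * c 2 - c 0 - c 1| / Real.sqrt 3 * y.2 := by
    calc |(c 1 - c 0) * y.1 + (2 * c 2 - c 0 - c 1) / Real.sqrt 3 * y.2|
        ≤ |(c 1 - c 0) * y.1| + |(2 * c 2 - c 0 - c 1) / Real.sqrt 3 * y.2| := abs_add_le _ _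
      _ = |c 1 - c 0| * y.1 + |2 * c 2 - c 0 - c 1| / Real.sqrt 3 * y.2 := by
          rw [abs_mul, abs_mul, abs_div, abs_of_nonneg hy1, abs_of_nonneg hy2,
            abs_of_nonneg (le_of_lt hs)]
  have h1 : |c 1 - c 0| * y.1 ≤ |c 1 - c 0| := by
    nlinarith [abs_nonneg (c 1 - c 0)]
  have h2 : |2 * c 2 - c 0 - c 1| / Real.sqrt 3 * y.2 ≤ |2 * c 2 - c 0 - c 1| / 2 := by
    have hd : 0 ≤ |2 * c 2 - c 0 - c 1| / Real.sqrt 3 := by positivity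
    have : |2 * c 2 - c 0 - c 1| / Real.sqrt 3 * y.2
        ≤ |2 * c 2 - c 0 - c 1| / Real.sqrt 3 * (Real.sqrt 3 / 2) := by nlinarith
    calc |2 * c 2 - c 0 - c 1| / Real.sqrt 3 * y.2
        ≤ |2 * c 2 - c 0 - c 1| / Real.sqrt 3 * (Real.sqrt 3 / 2) := this
      _ = |2 * c 2 - c 0 - c 1| / 2 := by
          field_simp
  have h3 : |2 * c 2 - c 0 - c 1| ≤ |c 2 - c 0| + |c 2 - c 1| := by
    have : 2 * c 2 - c 0 - c 1 = (c 2 - c 0) + (c 2 - c 1) := by ring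
    rw [this]; exact abs_add_le _ _
  have c10 := abs_sub_comm (c 1) (c 0)
  have c20 := abs_sub_comm (c 2) (c 0)
  have c21 := abs_sub_comm (c 2) (c 1)
  unfold N
  linarith [abs_nonneg (c 1 - c 2), abs_nonneg (c 0 - c 1), abs_nonneg (c 0 - c 2)]

lemma G_zero_diff' (b c : Fin 3 → ℝ) {x y : ℝ × ℝ} (hx : x ∈ Δ) (hy : y ∈ Δ)
    (hc : |c 0 - b 0| ≤ 3 / 5 * N b) (hNc : N c ≤ 3 / 5 * N b) :
    |G 0 c y - G 0 b x| ≤ 3 * N b := by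
  have h1 := G_zero_diff c hy
  have h2 := G_zero_diff b hx
  have h3 : |G 0 c y - G 0 b x| ≤ |G 0 c y - c 0| + |c 0 - b 0| + |b 0 - G 0 b x| := by
    have := abs_add_le (G 0 c y - c 0) (c 0 - b 0)
    have := abs_add_le (G 0 c y - c 0 + (c 0 - b 0)) (b 0 - G 0 b x)
    have e : G 0 c y - G 0 b x = (G 0 c y - c 0) + (c 0 - b 0) + (b 0 - G 0 b x) := by ring
    rw [e]
    calc |(G 0 c y - c 0) + (c 0 - b 0) + (b 0 - G 0 b x)|
        ≤ |(G 0 c y - c 0) + (c 0 - b 0)| + |b 0 - G 0 b x| := abs_add_le _ _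
      _ ≤ |G 0 c y - c 0| + |c 0 - b 0| + |b 0 - G 0 b x| := by
          linarith [abs_add_le (G 0 c y - c 0) (c 0 - b 0)]
  have h4 : |b 0 - G 0 b x| = |G 0 b x - b 0| := abs_sub_comm _ _
  have hN := N_nonneg b
  linarith

/-- uniform Cauchy estimate -/
lemma G_diff (m : ℕ) (b : Fin 3 → ℝ) {x : ℝ × ℝ} (hx : x ∈ Δ) :
    |G (m+1) b x - G m b x| ≤ 3 * (3/5)^m * N b := by
  induction m generalizing b x with
  | zero =>
    have hN := N_nonneg b
    by_cases h0 : finv 0 x ∈ Δ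
    · rw [G_succ h0 0 b]
      simpa using G_zero_diff' b (A 0 b) hx h0 (A_zero_diff 0 b) (N_A 0 b)
    · by_cases h1 : finv 1 x ∈ Δ
      · rw [G_succ h1 0 b]
        simpa using G_zero_diff' b (A 1 b) hx h1 (A_zero_diff 1 b) (N_A 1 b)
      · by_cases h2 : finv 2 x ∈ Δ
        · rw [G_succ h2 0 b]
          simpa using G_zero_diff' b (A 2 b) hx h2 (A_zero_diff 2 b) (N_A 2 b)
        · have e : G 1 b x = (b 0 + b 1 + b 2) / 3 := by
            simp only [G]; rw [if_neg h0, if_neg h1, if_neg h2]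
          rw [e]
          have := avg_diff b
          have h4 := G_zero_diff b hx
          have h5 : |(b 0 + b 1 + b 2)/3 - G 0 b x|
              ≤ |(b 0 + b 1 + b 2)/3 - b 0| + |b 0 - G 0 b x| := by
            have e2 : (b 0 + b 1 + b 2)/3 - G 0 b x
                = ((b 0 + b 1 + b 2)/3 - b 0) + (b 0 - G 0 b x) := by ring
            rw [e2]; exact abs_add_le _ _
          have h6 : |b 0 - G 0 b x| = |G 0 b x - b 0| := abs_sub_comm _ _
          simp only [pow_zero]
          linarith
  | succ m ih =>
    by_cases h0 : finv 0 x ∈ Δ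
    · rw [G_succ h0 (m+1) b, G_succ h0 m b]
      calc |G (m+1) (A 0 b) (finv 0 x) - G m (A 0 b) (finv 0 x)|
          ≤ 3 * (3/5)^m * N (A 0 b) := ih (A 0 b) h0
        _ ≤ 3 * (3/5)^m * (3/5 * N b) := by
            have : (0:ℝ) ≤ 3 * (3/5)^m := by positivity
            nlinarith [N_A 0 b]
        _ = 3 * (3/5)^(m+1) * N b := by ring
    · by_cases h1 : finv 1 x ∈ Δ
      · rw [G_succ h1 (m+1) b, G_succ h1 m b]
        calc |G (m+1) (A 1 b) (finv 1 x) - G m (A 1 b) (finv 1 x)|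
            ≤ 3 * (3/5)^m * N (A 1 b) := ih (A 1 b) h1
          _ ≤ 3 * (3/5)^m * (3/5 * N b) := by
              have : (0:ℝ) ≤ 3 * (3/5)^m := by positivity
              nlinarith [N_A 1 b]
          _ = 3 * (3/5)^(m+1) * N b := by ring
      · by_cases h2 : finv 2 x ∈ Δ
        · rw [G_succ h2 (m+1) b, G_succ h2 m b]
          calc |G (m+1) (A 2 b) (finv 2 x) - G m (A 2 b) (finv 2 x)|
              ≤ 3 * (3/5)^m * N (A 2 b) := ih (A 2 b) h2
            _ ≤ 3 * (3/5)^m * (3/5 * N b) := by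
                have : (0:ℝ) ≤ 3 * (3/5)^m := by positivity
                nlinarith [N_A 2 b]
            _ = 3 * (3/5)^(m+1) * N b := by ring
        · have e1 : G (m+2) b x = (b 0 + b 1 + b 2) / 3 := by
            simp only [G]; rw [if_neg h0, if_neg h1, if_neg h2]
          have e2 : G (m+1) b x = (b 0 + b 1 + b 2) / 3 := by
            simp only [G]; rw [if_neg h0, if_neg h1, if_neg h2]
          rw [e1, e2, sub_self, abs_zero]
          exact mul_nonneg (by positivity) (N_nonneg b)

lemma G_cont (m : ℕ) (b : Fin 3 → ℝ) : ContinuousOn (G m b) K := by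
  induction m generalizing b with
  | zero =>
    have : Continuous (G 0 b) := by
      simp only [G]; fun_prop
    exact this.continuousOn
  | succ m ih =>
    intro x hx
    have hclosed : ∀ j : Fin 3, IsClosed {z : ℝ × ℝ | finv j z ∈ Δ} := fun j =>
      Δ_closed.preimage (finv_cont j)
    have hpiece : ∀ j : Fin 3,
        ContinuousWithinAt (G (m+1) b) (K ∩ {z | finv j z ∈ Δ}) x := by
      intro j
      by_cases hxj : x ∈ K ∩ {z | finv j z ∈ Δ}
      · have heq : Set.EqOn (G (m+1) b) ((G m (A j b)) ∘ finv j) (K ∩ {z | finv j z ∈ Δ}) :=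
          fun z hz => G_succ hz.2 m b
        have hcomp : ContinuousOn ((G m (A j b)) ∘ finv j) (K ∩ {z | finv j z ∈ Δ}) :=
          (ih (A j b)).comp (finv_cont j).continuousOn
            (fun z hz => K_self hz.1 hz.2)
        exact ((hcomp x hxj).congr heq (heq hxj))
      · exact continuousWithinAt_of_notMem_closure
          (by rwa [IsClosed.closure_eq (K_closed.inter (hclosed j))])
    have hsub : K ⊆ (K ∩ {z | finv 0 z ∈ Δ}) ∪
        ((K ∩ {z | finv 1 z ∈ Δ}) ∪ (K ∩ {z | finv 2 z ∈ Δ})) := by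
      intro z hz
      rcases K_branch hz with h | h | h
      · exact Or.inl ⟨hz, h⟩
      · exact Or.inr (Or.inl ⟨hz, h⟩)
      · exact Or.inr (Or.inr ⟨hz, h⟩)
    exact ((hpiece 0).union ((hpiece 1).union (hpiece 2))).mono hsub

end SGP
namespace SGP
open SG

noncomputable def D (b : Fin 3 → ℝ) (x : ℝ × ℝ) : ℕ → ℝ
  | 0 => G 0 b x
  | (m+1) => G (m+1) b x - G m b x

noncomputable def Dbnd (b : Fin 3 → ℝ) : ℕ → ℝ
  | 0 => |b 0| + N b
  | (m+1) => 3 * (3/5)^m * N b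

/-- the harmonic function with boundary values `b` -/
noncomputable def H (b : Fin 3 → ℝ) (x : ℝ × ℝ) : ℝ := ∑' m, D b x m

lemma D_partial (b : Fin 3 → ℝ) (x : ℝ × ℝ) (M : ℕ) :
    ∑ m ∈ Finset.range (M+1), D b x m = G M b x := by
  induction M with
  | zero => simp [D]
  | succ M ih => rw [Finset.sum_range_succ, ih]; simp [D]

lemma D_bound (b : Fin 3 → ℝ) {x : ℝ × ℝ} (hx : x ∈ Δ) (m : ℕ) :
    |D b x m| ≤ Dbnd b m := by
  cases m with
  | zero =>
    have h := G_zero_diff b hx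
    have : |G 0 b x| ≤ |G 0 b x - b 0| + |b 0| := by
      calc |G 0 b x| = |(G 0 b x - b 0) + b 0| := by ring_nf
        _ ≤ |G 0 b x - b 0| + |b 0| := abs_add_le _ _
    simp only [D, Dbnd]
    linarith
  | succ m => exact G_diff m b hx

lemma Dbnd_summable (b : Fin 3 → ℝ) : Summable (Dbnd b) := by
  rw [← summable_nat_add_iff 1]
  have : (fun m => Dbnd b (m + 1)) = fun m => (3 * N b) * (3/5)^m := by
    funext m; simp only [Dbnd]; ring
  rw [this]
  exact (summable_geometric_of_lt_one (by norm_num) (by norm_num)).mul_left _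

lemma D_summable (b : Fin 3 → ℝ) {x : ℝ × ℝ} (hx : x ∈ Δ) : Summable (D b x) :=
  (Dbnd_summable b).of_norm_bounded (fun m => by
    rw [Real.norm_eq_abs]; exact D_bound b hx m)

lemma D_cont (b : Fin 3 → ℝ) (m : ℕ) : ContinuousOn (fun x => D b x m) K := by
  cases m with
  | zero => exact G_cont 0 b
  | succ m => exact (G_cont (m+1) b).sub (G_cont m b)

lemma H_cont (b : Fin 3 → ℝ) : ContinuousOn (H b) K := by
  apply continuousOn_tsum (D_cont b) (Dbnd_summable b)
  intro m x hx
  rw [Real.norm_eq_abs]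
  exact D_bound b (K_sub_Δ hx) m

lemma H_bound (b : Fin 3 → ℝ) {x : ℝ × ℝ} (hx : x ∈ Δ) :
    |H b x| ≤ |b 0| + 9 * N b := by
  have hs := D_summable b hx
  have habs : Summable fun m => |D b x m| := hs.abs
  have hnorm : Summable fun m => ‖D b x m‖ := by
    simpa only [Real.norm_eq_abs] using habs
  have h1 : ‖∑' m, D b x m‖ ≤ ∑' m, ‖D b x m‖ := norm_tsum_le_tsum_norm hnorm
  simp only [Real.norm_eq_abs] at h1
  have h2 : ∑' m, |D b x m| ≤ ∑' m, Dbnd b m :=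
    Summable.tsum_le_tsum (fun m => D_bound b hx m) habs (Dbnd_summable b)
  have h3 : ∑' m, Dbnd b m = |b 0| + N b + ∑' m, Dbnd b (m+1) := by
    rw [Summable.tsum_eq_zero_add (Dbnd_summable b)]; rfl
  have h4 : ∑' m, Dbnd b (m+1) = (3 * N b) * (5/2 : ℝ) := by
    have e : (fun m => Dbnd b (m + 1)) = fun m => (3 * N b) * (3/5)^m := by
      funext m; simp only [Dbnd]; ring
    rw [e, tsum_mul_left, tsum_geometric_of_lt_one (by norm_num) (by norm_num)]
    norm_num
  have hN := N_nonneg b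
  rw [h3, h4] at h2
  unfold H
  linarith

noncomputable def fl (l : List (Fin 3)) (x : ℝ × ℝ) : ℝ × ℝ := l.foldr f x

lemma fl_nil (x : ℝ × ℝ) : fl [] x = x := rfl
lemma fl_cons (j : Fin 3) (l : List (Fin 3)) (x : ℝ × ℝ) :
    fl (j :: l) x = f j (fl l x) := rfl

lemma fl_mem_Δ (l : List (Fin 3)) {x : ℝ × ℝ} (hx : x ∈ Δ) : fl l x ∈ Δ := by
  induction l with
  | nil => exact hx
  | cons j l ih => exact f_maps_Δ j ih

noncomputable def Bl : List (Fin 3) → (Fin 3 → ℝ) → Fin 3 → ℝ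
  | [], b => b
  | j :: l, b => Bl l (A j b)

lemma G_stab (l : List (Fin 3)) (m : ℕ) (b : Fin 3 → ℝ) (i : Fin 3)
    (hm : l.length ≤ m) : G m b (fl l (p i)) = Bl l b i := by
  induction l generalizing m b with
  | nil => exact G_p m b i
  | cons j l ih =>
    cases m with
    | zero => simp at hm
    | succ m =>
      rw [fl_cons, G_f (fl_mem_Δ l (p_mem_Δ i)) m b]
      exact ih m (A j b) (by simpa using hm)

lemma H_vertex (l : List (Fin 3)) (b : Fin 3 → ℝ) (i : Fin 3) :
    H b (fl l (p i)) = Bl l b i := by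
  have hxΔ : fl l (p i) ∈ Δ := fl_mem_Δ l (p_mem_Δ i)
  have hz : ∀ m ∉ Finset.range (l.length + 1), D b (fl l (p i)) m = 0 := by
    intro m hm
    simp only [Finset.mem_range, not_lt] at hm
    cases m with
    | zero => omega
    | succ m =>
      have h1 : l.length ≤ m := by omega
      have h2 : l.length ≤ m + 1 := by omega
      simp only [D]
      rw [G_stab l _ b i h1, G_stab l _ b i h2, sub_self]
  unfold H
  rw [tsum_eq_sum hz, D_partial]
  exact G_stab l _ b i (by omega)

lemma H_p (b : Fin 3 → ℝ) (i : Fin 3) : H b (p i) = b i := H_vertex [] b i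

end SGP
namespace SGP
open SG

/-- generic pasting lemma over the three cells -/
lemma paste3 {F : ℝ × ℝ → ℝ}
    (h : ∀ j : Fin 3, ∀ x ∈ K ∩ {z | finv j z ∈ Δ},
      ContinuousWithinAt F (K ∩ {z | finv j z ∈ Δ}) x) :
    ContinuousOn F K := by
  intro x hx
  have hclosed : ∀ j : Fin 3, IsClosed {z : ℝ × ℝ | finv j z ∈ Δ} := fun j =>
    Δ_closed.preimage (finv_cont j)
  have hpiece : ∀ j : Fin 3, ContinuousWithinAt F (K ∩ {z | finv j z ∈ Δ}) x := by
    intro j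
    by_cases hxj : x ∈ K ∩ {z | finv j z ∈ Δ}
    · exact h j x hxj
    · exact continuousWithinAt_of_notMem_closure
        (by rwa [IsClosed.closure_eq (K_closed.inter (hclosed j))])
  have hsub : K ⊆ (K ∩ {z | finv 0 z ∈ Δ}) ∪
      ((K ∩ {z | finv 1 z ∈ Δ}) ∪ (K ∩ {z | finv 2 z ∈ Δ})) := by
    intro z hz
    rcases K_branch hz with h' | h' | h'
    · exact Or.inl ⟨hz, h'⟩
    · exact Or.inr (Or.inl ⟨hz, h'⟩)
    · exact Or.inr (Or.inr ⟨hz, h'⟩)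
  exact ((hpiece 0).union ((hpiece 1).union (hpiece 2))).mono hsub

/-- boundary values of the tent function -/
noncomputable def bb (j : Fin 3) : Fin 3 → ℝ := fun i => if i = j then 0 else 1

open Classical in
/-- the tent function: 0 at the three corners, piecewise harmonic, value 1 at midpoints -/
noncomputable def χ (x : ℝ × ℝ) : ℝ :=
  if finv 0 x ∈ Δ then H (bb 0) (finv 0 x)
  else if finv 1 x ∈ Δ then H (bb 1) (finv 1 x)
  else if finv 2 x ∈ Δ then H (bb 2) (finv 2 x)
  else 0

lemma H_branch_agree {i j : Fin 3} (hij : i ≠ j) {x : ℝ × ℝ}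
    (hj : finv j x ∈ Δ) (hi : finv i x ∈ Δ) :
    H (bb i) (finv i x) = H (bb j) (finv j x) := by
  obtain ⟨e1, e2⟩ := branch_eq hij hj hi
  rw [e1, e2, H_p, H_p]
  simp only [bb, if_neg hij, if_neg (Ne.symm hij)]

lemma χ_eq {j : Fin 3} {x : ℝ × ℝ} (hx : finv j x ∈ Δ) : χ x = H (bb j) (finv j x) := by
  rcases fin3_cases j with rfl | rfl | rfl
  · unfold χ; rw [if_pos hx]
  · unfold χ
    by_cases h0 : finv 0 x ∈ Δ
    · rw [if_pos h0]; exact H_branch_agree (by decide) hx h0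
    · rw [if_neg h0, if_pos hx]
  · unfold χ
    by_cases h0 : finv 0 x ∈ Δ
    · rw [if_pos h0]; exact H_branch_agree (by decide) hx h0
    · by_cases h1 : finv 1 x ∈ Δ
      · rw [if_neg h0, if_pos h1]; exact H_branch_agree (by decide) hx h1
      · rw [if_neg h0, if_neg h1, if_pos hx]

lemma χ_f {j : Fin 3} {y : ℝ × ℝ} (hy : y ∈ Δ) : χ (f j y) = H (bb j) y := by
  have h : finv j (f j y) ∈ Δ := by rwa [finv_f_same]
  rw [χ_eq h, finv_f_same]

lemma χ_p (i : Fin 3) : χ (p i) = 0 := by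
  have h : finv i (p i) ∈ Δ := by rw [finv_p_self]; exact p_mem_Δ i
  rw [χ_eq h, finv_p_self, H_p]
  simp [bb]

lemma χ_cont : ContinuousOn χ K := by
  apply paste3
  intro j x hxj
  have heq : Set.EqOn χ ((H (bb j)) ∘ finv j) (K ∩ {z | finv j z ∈ Δ}) :=
    fun z hz => χ_eq hz.2
  have hcomp : ContinuousOn ((H (bb j)) ∘ finv j) (K ∩ {z | finv j z ∈ Δ}) :=
    (H_cont (bb j)).comp (finv_cont j).continuousOn (fun z hz => K_self hz.1 hz.2)
  exact (hcomp x hxj).congr heq (heq hxj)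

lemma bb_bound (j : Fin 3) : |bb j 0| + 9 * N (bb j) ≤ 19 := by
  rcases fin3_cases j with rfl | rfl | rfl <;> norm_num [bb, N, Fin.ext_iff]

lemma χ_bound (x : ℝ × ℝ) : |χ x| ≤ 19 := by
  unfold χ
  split_ifs with h0 h1 h2
  · exact le_trans (H_bound (bb 0) h0) (bb_bound 0)
  · exact le_trans (H_bound (bb 1) h1) (bb_bound 1)
  · exact le_trans (H_bound (bb 2) h2) (bb_bound 2)
  · norm_num

open Classical in
/-- localization operator -/
noncomputable def Lop (j : Fin 3) (g : ℝ × ℝ → ℝ) (x : ℝ × ℝ) : ℝ :=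
  if finv j x ∈ Δ then g (finv j x) else 0

lemma Lop_f_same (j : Fin 3) (g : ℝ × ℝ → ℝ) {x : ℝ × ℝ} (hx : x ∈ Δ) :
    Lop j g (f j x) = g x := by
  unfold Lop
  rw [if_pos (by rwa [finv_f_same]), finv_f_same]

lemma Lop_resolve {i j : Fin 3} (hij : i ≠ j) {x : ℝ × ℝ} (hx : x ∈ Δ)
    (h : finv j (f i x) ∈ Δ) : x = p j ∧ finv j (f i x) = p i := by
  rw [finv_f] at h ⊢
  have e := collision (Ne.symm hij) hx h
  refine ⟨e, ?_⟩
  rw [e]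
  exact Prod.ext (by ring) (by ring)

lemma Lop_f_ne {i j : Fin 3} (hij : i ≠ j) (g : ℝ × ℝ → ℝ) {x : ℝ × ℝ} (hx : x ∈ Δ)
    (hg : g (p i) = 0) : Lop j g (f i x) = 0 := by
  unfold Lop
  split_ifs with h
  · rw [(Lop_resolve hij hx h).2, hg]
  · rfl

lemma f_p_self (i : Fin 3) : f i (p i) = p i := by
  fin_cases i <;> simp [f, p, Prod.ext_iff] <;> norm_num

lemma Lop_p (j : Fin 3) (g : ℝ × ℝ → ℝ) (hg : ∀ k, g (p k) = 0) (i : Fin 3) :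
    Lop j g (p i) = 0 := by
  by_cases hij : i = j
  · subst hij
    rw [← f_p_self i, Lop_f_same i g (p_mem_Δ i)]
    exact hg i
  · rw [← f_p_self i]
    exact Lop_f_ne hij g (p_mem_Δ i) (hg i)

lemma Lop_cont (j : Fin 3) (g : ℝ × ℝ → ℝ) (hgc : ContinuousOn g K)
    (hg : ∀ k, g (p k) = 0) : ContinuousOn (Lop j g) K := by
  apply paste3
  intro i x hxi
  by_cases hij : i = j
  · subst hij
    have heq : Set.EqOn (Lop i g) (g ∘ finv i) (K ∩ {z | finv i z ∈ Δ}) := by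
      intro z hz
      unfold Lop
      rw [if_pos (show finv i z ∈ Δ from hz.2)]
      rfl
    have hcomp : ContinuousOn (g ∘ finv i) (K ∩ {z | finv i z ∈ Δ}) :=
      hgc.comp (finv_cont i).continuousOn (fun z hz => K_self hz.1 hz.2)
    exact (hcomp x hxi).congr heq (heq hxi)
  · have heq : Set.EqOn (Lop j g) (fun _ => (0:ℝ)) (K ∩ {z | finv i z ∈ Δ}) := by
      intro z hz
      have hz2 : finv i z ∈ Δ := hz.2
      have : z = f i (finv i z) := (f_finv i z).symm
      rw [this]
      exact Lop_f_ne hij g hz2 (hg i)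
    exact (continuousWithinAt_const.congr heq (heq hxi))

lemma Lop_bound (j : Fin 3) (g : ℝ × ℝ → ℝ) {C : ℝ} (hC : 0 ≤ C)
    (hg : ∀ y, |g y| ≤ C) (x : ℝ × ℝ) : |Lop j g x| ≤ C := by
  unfold Lop
  split_ifs with h
  · exact hg _
  · simpa using hC

end SGP
namespace SGP
open SG

noncomputable def Φ : ℕ → ℝ × ℝ → ℝ
  | 0 => Lop 1 χ
  | (k+1) => Lop 0 (Φ k)

lemma Φ_p (k : ℕ) (i : Fin 3) : Φ k (p i) = 0 := by
  induction k generalizing i with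
  | zero => exact Lop_p 1 χ χ_p i
  | succ k ih => exact Lop_p 0 (Φ k) (fun k' => ih k') i

lemma Φ_cont (k : ℕ) : ContinuousOn (Φ k) K := by
  induction k with
  | zero => exact Lop_cont 1 χ χ_cont χ_p
  | succ k ih => exact Lop_cont 0 (Φ k) ih (Φ_p k)

lemma Φ_bound (k : ℕ) (x : ℝ × ℝ) : |Φ k x| ≤ 19 := by
  induction k generalizing x with
  | zero => exact Lop_bound 1 χ (by norm_num) χ_bound x
  | succ k ih => exact Lop_bound 0 (Φ k) (by norm_num) ih x

lemma Φ_f1_zero (k : ℕ) {x : ℝ × ℝ} (hx : x ∈ Δ) : Φ (k+1) (f 1 x) = 0 :=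
  Lop_f_ne (by decide) (Φ k) hx (Φ_p k 1)

lemma Φ_f0_succ (k : ℕ) {x : ℝ × ℝ} (hx : x ∈ Δ) : Φ (k+1) (f 0 x) = Φ k x :=
  Lop_f_same 0 (Φ k) hx

lemma Φ_f0_zero {x : ℝ × ℝ} (hx : x ∈ Δ) : Φ 0 (f 0 x) = 0 :=
  Lop_f_ne (by decide) χ hx (χ_p 0)

lemma Φ_f1_first {x : ℝ × ℝ} (hx : x ∈ Δ) : Φ 0 (f 1 x) = χ x :=
  Lop_f_same 1 χ hx

lemma Φ_f2 (k : ℕ) {x : ℝ × ℝ} (hx : x ∈ Δ) : Φ k (f 2 x) = 0 := by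
  cases k with
  | zero => exact Lop_f_ne (by decide) χ hx (χ_p 2)
  | succ k => exact Lop_f_ne (by decide) (Φ k) hx (Φ_p k 2)

noncomputable def rr : ℝ := Real.sqrt (3/5)

lemma rr_pos : 0 < rr := Real.sqrt_pos.2 (by norm_num)
lemma rr_lt_one : rr < 1 := by
  rw [show (1:ℝ) = Real.sqrt 1 from (Real.sqrt_one).symm]
  exact Real.sqrt_lt_sqrt (by norm_num) (by norm_num)
lemma rr_sq : rr^2 = 3/5 := Real.sq_sqrt (by norm_num)

/-- THE function: a series of localized tent bumps with geometrically decaying amplitudes -/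
noncomputable def uu : ℝ × ℝ → ℝ := fun x => ∑' k, rr^(k+1) * Φ k x

lemma uu_summable (x : ℝ × ℝ) : Summable fun k => rr^(k+1) * Φ k x := by
  apply Summable.of_norm_bounded (g := fun k => (19 * rr) * rr ^ k)
  · exact (summable_geometric_of_lt_one rr_pos.le rr_lt_one).mul_left _
  · intro k
    rw [Real.norm_eq_abs, abs_mul, abs_of_nonneg (pow_nonneg rr_pos.le (k+1))]
    have h1 := Φ_bound k x
    have h2 : (0:ℝ) < rr^(k+1) := pow_pos rr_pos (k+1)
    have habs := abs_nonneg (Φ k x)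
    nlinarith [pow_succ rr k]

lemma uu_cont : ContinuousOn uu K := by
  apply continuousOn_tsum (fun k => (continuousOn_const.mul (Φ_cont k)))
    ((summable_geometric_of_lt_one rr_pos.le rr_lt_one).mul_left (19 * rr))
  intro k x _
  rw [Real.norm_eq_abs]
  show |rr^(k+1) * Φ k x| ≤ 19 * rr * rr ^ k
  rw [abs_mul, abs_of_nonneg (pow_nonneg rr_pos.le (k+1))]
  have h1 := Φ_bound k x
  have h2 : (0:ℝ) < rr^(k+1) := pow_pos rr_pos (k+1)
  have habs := abs_nonneg (Φ k x)
  nlinarith [pow_succ rr k]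

lemma uu_p (i : Fin 3) : uu (p i) = 0 := by
  unfold uu
  have : (fun k => rr^(k+1) * Φ k (p i)) = fun _ => (0:ℝ) := by
    funext k; rw [Φ_p k i, mul_zero]
  rw [this, tsum_zero]

lemma uu_f0 {x : ℝ × ℝ} (hx : x ∈ Δ) : uu (f 0 x) = rr * uu x := by
  unfold uu
  rw [Summable.tsum_eq_zero_add (uu_summable (f 0 x))]
  have h0 : rr^(0+1) * Φ 0 (f 0 x) = 0 := by rw [Φ_f0_zero hx, mul_zero]
  rw [h0, zero_add]
  have he : (fun k => rr^(k+1+1) * Φ (k+1) (f 0 x)) = fun k => rr * (rr^(k+1) * Φ k x) := by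
    funext k
    rw [Φ_f0_succ k hx]
    ring
  rw [he, tsum_mul_left]

lemma uu_f1 {x : ℝ × ℝ} (hx : x ∈ Δ) : uu (f 1 x) = rr * χ x := by
  unfold uu
  rw [Summable.tsum_eq_zero_add (uu_summable (f 1 x))]
  have h0 : rr^(0+1) * Φ 0 (f 1 x) = rr * χ x := by rw [Φ_f1_first hx]; ring
  have he : (fun k => rr^(k+1+1) * Φ (k+1) (f 1 x)) = fun _ => (0:ℝ) := by
    funext k
    rw [Φ_f1_zero k hx, mul_zero]
  rw [h0, he, tsum_zero, add_zero]

lemma uu_f2 {x : ℝ × ℝ} (hx : x ∈ Δ) : uu (f 2 x) = 0 := by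
  unfold uu
  have : (fun k => rr^(k+1) * Φ k (f 2 x)) = fun _ => (0:ℝ) := by
    funext k; rw [Φ_f2 k hx, mul_zero]
  rw [this, tsum_zero]

/-- vertex values of the tent function -/
noncomputable def χv : List (Fin 3) → Fin 3 → ℝ
  | [] => fun _ => 0
  | j :: l => Bl l (bb j)

lemma χ_vertex (l : List (Fin 3)) (i : Fin 3) : χ (fl l (p i)) = χv l i := by
  cases l with
  | nil => exact χ_p i
  | cons j l =>
    rw [fl_cons, χ_f (fl_mem_Δ l (p_mem_Δ i)), H_vertex]
    rfl

/-- vertex values of `uu` -/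
noncomputable def uval : List (Fin 3) → Fin 3 → ℝ
  | [] => fun _ => 0
  | j :: l => if j = 0 then fun i => rr * uval l i
      else if j = 1 then fun i => rr * χv l i else fun _ => 0

lemma uu_vertex (l : List (Fin 3)) (i : Fin 3) : uu (fl l (p i)) = uval l i := by
  induction l generalizing i with
  | nil => exact uu_p i
  | cons j l ih =>
    have hΔ : fl l (p i) ∈ Δ := fl_mem_Δ l (p_mem_Δ i)
    rcases fin3_cases j with rfl | rfl | rfl
    · rw [fl_cons, uu_f0 hΔ, ih i]
      simp [uval]
    · rw [fl_cons, uu_f1 hΔ, χ_vertex l i]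
      simp [uval]
    · rw [fl_cons, uu_f2 hΔ]
      simp [uval]

end SGP
namespace SGP
open SG

lemma sum_words_succ {r : ℕ} (F : (Fin (r+1) → Fin 3) → ℝ) :
    ∑ w : Fin (r+1) → Fin 3, F w
      = ∑ j : Fin 3, ∑ v : Fin r → Fin 3, F (Fin.cons j v) := by
  calc ∑ w : Fin (r+1) → Fin 3, F w
      = ∑ q : Fin 3 × (Fin r → Fin 3), F (Fin.cons q.1 q.2) :=
        (Fintype.sum_equiv (Fin.consEquiv fun _ => Fin 3) _ _ (fun q => rfl)).symm
    _ = ∑ j : Fin 3, ∑ v : Fin r → Fin 3, F (Fin.cons j v) := by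
        rw [Fintype.sum_prod_type]

lemma ofFn_cons {r : ℕ} (j : Fin 3) (v : Fin r → Fin 3) :
    List.ofFn (Fin.cons j v) = j :: List.ofFn v := by
  rw [List.ofFn_succ]
  congr 1

lemma Q_Bl (r : ℕ) (b : Fin 3 → ℝ) :
    ∑ w : Fin r → Fin 3, Q (Bl (List.ofFn w) b) = (3/5)^r * Q b := by
  induction r generalizing b with
  | zero => simp [Bl, List.ofFn_zero]
  | succ r ih =>
    rw [sum_words_succ (fun w => Q (Bl (List.ofFn w) b))]
    have he : ∀ j : Fin 3, ∀ v : Fin r → Fin 3,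
        Q (Bl (List.ofFn (Fin.cons j v)) b) = Q (Bl (List.ofFn v) (A j b)) := by
      intro j v
      rw [ofFn_cons]
      rfl
    calc ∑ j : Fin 3, ∑ v : Fin r → Fin 3, Q (Bl (List.ofFn (Fin.cons j v)) b)
        = ∑ j : Fin 3, ∑ v : Fin r → Fin 3, Q (Bl (List.ofFn v) (A j b)) := by
          refine Finset.sum_congr rfl (fun j _ => Finset.sum_congr rfl (fun v _ => he j v))
      _ = ∑ j : Fin 3, (3/5)^r * Q (A j b) := by
          refine Finset.sum_congr rfl (fun j _ => ih (A j b))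
      _ = (3/5)^r * (Q (A 0 b) + Q (A 1 b) + Q (A 2 b)) := by
          rw [Fin.sum_univ_three]; ring
      _ = (3/5)^(r+1) * Q b := by rw [Q_sum_A]; ring

noncomputable def Sχ (r : ℕ) : ℝ := ∑ w : Fin r → Fin 3, Q (χv (List.ofFn w))

lemma Q_bb (j : Fin 3) : Q (bb j) = 4 := by
  rcases fin3_cases j with rfl | rfl | rfl <;> norm_num [Q_expand, bb, Fin.ext_iff]

lemma Sχ_zero : Sχ 0 = 0 := by
  unfold Sχ
  simp [List.ofFn_zero, χv, Q_const_zero]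

lemma Sχ_succ (r : ℕ) : Sχ (r+1) = (3/5)^r * 12 := by
  unfold Sχ
  rw [sum_words_succ (fun w => Q (χv (List.ofFn w)))]
  have he : ∀ j : Fin 3, ∀ v : Fin r → Fin 3,
      Q (χv (List.ofFn (Fin.cons j v))) = Q (Bl (List.ofFn v) (bb j)) := by
    intro j v
    rw [ofFn_cons]
    rfl
  calc ∑ j : Fin 3, ∑ v : Fin r → Fin 3, Q (χv (List.ofFn (Fin.cons j v)))
      = ∑ j : Fin 3, ∑ v : Fin r → Fin 3, Q (Bl (List.ofFn v) (bb j)) := by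
        refine Finset.sum_congr rfl (fun j _ => Finset.sum_congr rfl (fun v _ => he j v))
    _ = ∑ j : Fin 3, (3/5)^r * Q (bb j) := by
        refine Finset.sum_congr rfl (fun j _ => Q_Bl r (bb j))
    _ = (3/5)^r * 12 := by
        rw [Fin.sum_univ_three, Q_bb, Q_bb, Q_bb]; ring

noncomputable def Su (n : ℕ) : ℝ := ∑ w : Fin n → Fin 3, Q (uval (List.ofFn w))

lemma Su_zero : Su 0 = 0 := by
  unfold Su
  simp [List.ofFn_zero, uval, Q_const_zero]

lemma uval_cons0 (l : List (Fin 3)) : uval (0 :: l) = fun i => rr * uval l i := by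
  simp [uval]

lemma uval_cons1 (l : List (Fin 3)) : uval (1 :: l) = fun i => rr * χv l i := by
  simp [uval]

lemma uval_cons2 (l : List (Fin 3)) : uval (2 :: l) = fun _ => (0:ℝ) := by
  simp [uval]

lemma Su_succ (n : ℕ) : Su (n+1) = (3/5) * (Su n + Sχ n) := by
  unfold Su Sχ
  rw [sum_words_succ (fun w => Q (uval (List.ofFn w)))]
  rw [Fin.sum_univ_three]
  have h0 : ∑ v : Fin n → Fin 3, Q (uval (List.ofFn (Fin.cons 0 v)))
      = (3/5) * ∑ v : Fin n → Fin 3, Q (uval (List.ofFn v)) := by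
    rw [Finset.mul_sum]
    refine Finset.sum_congr rfl (fun v _ => ?_)
    rw [ofFn_cons, uval_cons0, Q_smul, rr_sq]
  have h1 : ∑ v : Fin n → Fin 3, Q (uval (List.ofFn (Fin.cons 1 v)))
      = (3/5) * ∑ v : Fin n → Fin 3, Q (χv (List.ofFn v)) := by
    rw [Finset.mul_sum]
    refine Finset.sum_congr rfl (fun v _ => ?_)
    rw [ofFn_cons, uval_cons1, Q_smul, rr_sq]
  have h2 : ∑ v : Fin n → Fin 3, Q (uval (List.ofFn (Fin.cons 2 v))) = 0 := by
    refine Finset.sum_eq_zero (fun v _ => ?_)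
    rw [ofFn_cons, uval_cons2, Q_const_zero]
  rw [h0, h1, h2]
  ring

lemma Su_form (n : ℕ) : Su (n+1) = 12 * n * (3/5)^n := by
  induction n with
  | zero => rw [Su_succ, Su_zero, Sχ_zero]; norm_num
  | succ n ih =>
    rw [Su_succ, ih, Sχ_succ]
    push_cast
    ring

end SGP
namespace SGP
open SG

lemma a_eq (n : ℕ) (g : ℝ × ℝ → ℝ) :
    a n g = (5/3)^n * (∑ w : Fin n → Fin 3, Q (fun i => g (fw w (p i)))) / 2 := by
  unfold SG.a
  simp only [Q]
  rw [← Finset.sum_div]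
  ring

lemma a_nonneg (n : ℕ) (g : ℝ × ℝ → ℝ) : 0 ≤ a n g := by
  unfold SG.a
  positivity

lemma a_uu (n : ℕ) : a (n+1) uu = 10 * n := by
  rw [a_eq]
  have hsum : (∑ w : Fin (n+1) → Fin 3, Q (fun i => uu (fw w (p i)))) = Su (n+1) := by
    unfold Su
    refine Finset.sum_congr rfl (fun w _ => ?_)
    congr 1
    funext i
    exact uu_vertex (List.ofFn w) i
  rw [hsum, Su_form]
  have hpow : (5/3:ℝ)^(n+1) * (3/5)^n = 5/3 := by
    rw [pow_succ]
    have h1 : (5/3:ℝ)^n * (3/5)^n = 1 := by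
      rw [← mul_pow]; norm_num
    calc (5/3:ℝ)^n * (5/3) * (3/5)^n = ((5/3:ℝ)^n * (3/5)^n) * (5/3) := by ring
      _ = 5/3 := by rw [h1]; ring
  calc (5/3:ℝ)^(n+1) * (12 * n * (3/5)^n) / 2
      = ((5/3:ℝ)^(n+1) * (3/5)^n) * (6 * n) := by ring
    _ = 10 * n := by rw [hpow]; ring

lemma summable_fbeta_of_bdd {β : ℝ} (hβ : β < Real.log 5 / Real.log 2)
    (v : ℝ × ℝ → ℝ) (M : ℝ) (hM : ∀ n : ℕ, a (n+1) v ≤ M) :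
    Summable fun n : ℕ =>
      (2 : ℝ) ^ ((β - Real.log 5 / Real.log 2) * (n + 1)) * a (n + 1) v := by
  set c := β - Real.log 5 / Real.log 2 with hc
  have hcneg : c < 0 := sub_neg.2 hβ
  set r := (2:ℝ) ^ c with hr
  have hr0 : 0 < r := Real.rpow_pos_of_pos (by norm_num) c
  have hr1 : r < 1 := Real.rpow_lt_one_of_one_lt_of_neg (by norm_num) hcneg
  have hkey : ∀ n : ℕ, (2:ℝ) ^ (c * ((n:ℝ) + 1)) = r ^ (n+1) := by
    intro n
    rw [hr, ← Real.rpow_natCast ((2:ℝ)^c) (n+1), ← Real.rpow_mul (by norm_num : (0:ℝ) ≤ 2)]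
    push_cast
    ring_nf
  refine Summable.of_nonneg_of_le (fun n => ?_) (fun n => ?_)
    (((summable_geometric_of_lt_one hr0.le hr1).mul_left (max M 0 * r)))
  · exact mul_nonneg (Real.rpow_pos_of_pos (by norm_num) _).le (a_nonneg _ v)
  · calc (2:ℝ) ^ (c * ((n:ℝ) + 1)) * a (n+1) v
        = r^(n+1) * a (n+1) v := by rw [hkey n]
      _ ≤ r^(n+1) * max M 0 := by
          have := le_trans (hM n) (le_max_left M 0)
          exact mul_le_mul_of_nonneg_left this (pow_nonneg hr0.le _)
      _ = (max M 0 * r) * r^n := by ring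

lemma summable_fbeta_uu {β : ℝ} (hβ : β < Real.log 5 / Real.log 2) :
    Summable fun n : ℕ =>
      (2 : ℝ) ^ ((β - Real.log 5 / Real.log 2) * (n + 1)) * a (n + 1) uu := by
  set c := β - Real.log 5 / Real.log 2 with hc
  have hcneg : c < 0 := sub_neg.2 hβ
  set r := (2:ℝ) ^ c with hr
  have hr0 : 0 < r := Real.rpow_pos_of_pos (by norm_num) c
  have hr1 : r < 1 := Real.rpow_lt_one_of_one_lt_of_neg (by norm_num) hcneg
  have hkey : ∀ n : ℕ, (2:ℝ) ^ (c * ((n:ℝ) + 1)) = r ^ (n+1) := by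
    intro n
    rw [hr, ← Real.rpow_natCast ((2:ℝ)^c) (n+1), ← Real.rpow_mul (by norm_num : (0:ℝ) ≤ 2)]
    push_cast
    ring_nf
  have hbase : Summable fun n : ℕ => ((n:ℝ))^1 * r^n :=
    summable_pow_mul_geometric_of_norm_lt_one 1
      (by rw [Real.norm_eq_abs, abs_of_pos hr0]; exact hr1)
  apply Summable.congr ((hbase.mul_left (10 * r)))
  intro n
  rw [hkey n, a_uu n]
  ring

end SGP

/-- On the Sierpiński gasket, with `α = log 3 / log 2` and `β* = log 5 / log 2`,
the domain `F_loc` is strictly contained in `⋂_{β ∈ (α, β*)} F_β`. -/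
theorem stmt_3 :
    SG.Floc ⊂ ⋂ β ∈ Set.Ioo (Real.log 3 / Real.log 2) (Real.log 5 / Real.log 2),
      SG.Fbeta β := by
  have hsub : SG.Floc ⊆ ⋂ β ∈ Set.Ioo (Real.log 3 / Real.log 2) (Real.log 5 / Real.log 2),
      SG.Fbeta β := by
    rintro v ⟨hc, hb⟩
    simp only [Set.mem_iInter]
    intro β hβ
    obtain ⟨M, hM⟩ := hb
    refine ⟨hc, ?_⟩
    exact SGP.summable_fbeta_of_bdd hβ.2 v M (fun n => hM (Set.mem_range_self n))
  rw [Set.ssubset_iff_of_subset hsub]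
  refine ⟨SGP.uu, ?_, ?_⟩
  · simp only [Set.mem_iInter]
    intro β hβ
    exact ⟨SGP.uu_cont, SGP.summable_fbeta_uu hβ.2⟩
  · rintro ⟨-, M, hM⟩
    obtain ⟨n, hn⟩ := exists_nat_gt (M / 10)
    have h1 : SG.a (n+1) SGP.uu ≤ M := hM (Set.mem_range_self n)
    rw [SGP.a_uu n] at h1
    linarith
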